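/- Let K be a field of characteristic 0, p ≥ 3 odd, d, R ∈ K nonzero with √R ∉ K and (Z^p − d)² − R irreducible over K; set D = d² − R and h = Z^p − d − √R. Let z be any p-th root of D and u a root of the polynomial f (of degree p as in the paper). Then there exists a unique root y of h such that, setting y' = z/y, one has u = z^((p−1)/2)·(y + y'). Equivalently, the map y ↦ z^((p−1)/2)(y + z/y) is a bijection from the set of roots of h onto the set of roots of f. -/

import Mathlib

open Polynomial Finset

/-- The coefficient `c_{2k+1}` of the paper. -/
def cOdd (p k : ℕ) : ℚ :=
  (-1) ^ ((p - 1) / 2 - k) * ((p : ℚ) / (((p + 1) / 2 + k : ℕ) : ℚ)) *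
    (Nat.choose ((p + 1) / 2 + k) (2 * k + 1) : ℚ)

/-- Coefficients of the Dickson polynomial of the first kind (unsigned). -/
def aC (n j : ℕ) : ℕ :=
  if 2*j ≤ n then Nat.choose (n-j) j + (if j = 0 then 0 else Nat.choose (n-j-1) (j-1)) else 0

lemma aC_zero (n : ℕ) : aC n 0 = 1 := by simp [aC]

lemma aC_of_gt {n j : ℕ} (h : n < 2*j) : aC n j = 0 := by simp [aC, Nat.not_le.mpr h]

lemma aC_two : aC 2 1 = 2 := by decide

lemma aC_succ {n j a : ℕ} (h : 2*(j+1) ≤ n) (ha : n - (j+1) = a+1) :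
    aC n (j+1) = Nat.choose (a+1) (j+1) + Nat.choose a j := by
  unfold aC
  rw [if_pos h, if_neg (Nat.succ_ne_zero j), ha]
  simp

lemma aC_rec (n j : ℕ) (hn : 1 ≤ n) :
    aC (n+2) (j+1) = aC (n+1) (j+1) + aC n j := by
  rcases Nat.lt_or_ge n (2*(j+1)) with h | h
  · rcases Nat.lt_or_ge (n+2) (2*(j+1)) with h2 | h2
    · rw [aC_of_gt h2, aC_of_gt (by omega), aC_of_gt (by omega)]
    rcases Nat.eq_or_lt_of_le h2 with h2 | h2
    · -- n = 2j, n ≥ 1 forces j ≥ 1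
      obtain ⟨i, rfl⟩ : ∃ i, j = i + 1 := ⟨j - 1, by omega⟩
      have hn' : n = 2*i + 2 := by omega
      subst hn'
      rw [aC_succ (by omega) (show 2*i+2+2 - (i+1+1) = (i+1)+1 by omega),
        aC_of_gt (show 2*i+2+1 < 2*(i+1+1) by omega),
        aC_succ (by omega) (show 2*i+2 - (i+1) = i+1 by omega)]
      simp [Nat.choose_self]
    · -- n = 2j+1
      have hn' : n = 2*j + 1 := by omega
      subst hn'
      rw [aC_succ (by omega) (show 2*j+1+2 - (j+1) = (j+1)+1 by omega),
        aC_succ (by omega) (show 2*j+1+1 - (j+1) = j+1 by omega)]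
      rcases Nat.eq_zero_or_pos j with rfl | hj
      · decide
      obtain ⟨i, rfl⟩ : ∃ i, j = i + 1 := ⟨j - 1, by omega⟩
      rw [aC_succ (by omega) (show 2*(i+1)+1 - (i+1) = (i+1)+1 by omega)]
      simp [Nat.choose_succ_self_right, Nat.choose_self]
      omega
  · obtain ⟨m, rfl⟩ : ∃ m, n = 2*j+2+m := ⟨n - (2*j+2), by omega⟩
    rw [aC_succ (by omega) (show 2*j+2+m+2 - (j+1) = (j+m+2)+1 by omega),
      aC_succ (by omega) (show 2*j+2+m+1 - (j+1) = (j+m+1)+1 by omega)]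
    rcases Nat.eq_zero_or_pos j with rfl | hj
    · rw [aC_zero]
      simp [Nat.choose_one_right]
    obtain ⟨i, rfl⟩ : ∃ i, j = i + 1 := ⟨j - 1, by omega⟩
    rw [aC_succ (by omega) (show 2*(i+1)+2+m - (i+1) = (i+m+2)+1 by omega)]
    have e1 : i+1+m+2 = i+m+3 := by omega
    have e2 : i+1+m+1 = i+m+2 := by omega
    rw [e1, e2]
    rw [show i+m+2+1 = i+m+3 from rfl, show i+m+1+1 = i+m+2 from rfl]
    have p1 := Nat.choose_succ_succ (i+m+3) (i+1)
    have p2 := Nat.choose_succ_succ (i+m+2) i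
    simp only [Nat.succ_eq_add_one] at p1 p2
    rw [show i+m+2+1 = i+m+3 from rfl] at p2
    omega

lemma aC_mul (p j : ℕ) (h : 2*j ≤ p) :
    p * Nat.choose (p-j) j = (p-j) * aC p j := by
  rcases Nat.eq_zero_or_pos j with rfl | hj
  · simp [aC_zero]
  obtain ⟨i, rfl⟩ : ∃ i, j = i + 1 := ⟨j - 1, by omega⟩
  obtain ⟨m, rfl⟩ : ∃ m, p = 2*i+2+m := ⟨p - (2*i+2), by omega⟩
  rw [show 2*i+2+m - (i+1) = i+m+1 from by omega,
    aC_succ h (show 2*i+2+m - (i+1) = (i+m)+1 from by omega)]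
  have key := Nat.add_one_mul_choose_eq (i+m) i
  calc (2*i+2+m) * (i+m+1).choose (i+1)
      = (i+m+1) * (i+m+1).choose (i+1) + (i+1) * (i+m+1).choose (i+1) := by ring
    _ = (i+m+1) * (i+m+1).choose (i+1) + (i+m+1) * (i+m).choose i := by
        rw [show (i+1) * (i+m+1).choose (i+1) = (i+m+1).choose (i+1) * (i+1) from by ring, ← key]
    _ = (i+m+1) * ((i+m+1).choose (i+1) + (i+m).choose i) := by ring

lemma cOdd_eq (q k : ℕ) (hk : k ≤ q) :
    cOdd (2*q+1) k = (-1) ^ (q - k) * (aC (2*q+1) (q-k) : ℚ) := by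
  unfold cOdd
  rw [show (2*q+1-1)/2 = q from by omega, show (2*q+1+1)/2 = q+1 from by omega]
  have hsym : Nat.choose (q+1+k) (2*k+1) = Nat.choose (q+1+k) (q-k) := by
    rw [show q - k = (q+1+k) - (2*k+1) from by omega, Nat.choose_symm (by omega)]
  have hmul := aC_mul (2*q+1) (q-k) (by omega)
  rw [show 2*q+1 - (q-k) = q+1+k from by omega] at hmul
  have hne : ((q:ℚ)+1+k) ≠ 0 := by positivity
  have hq : ((2*q+1 : ℕ) : ℚ) * (Nat.choose (q+1+k) (q-k) : ℚ)
      = ((q:ℚ)+1+k) * (aC (2*q+1) (q-k) : ℚ) := by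
    exact_mod_cast congrArg (Nat.cast (R := ℚ)) hmul
  rw [hsym]
  push_cast
  push_cast at hq
  field_simp
  linear_combination hq

lemma key_sum {L : Type*} [CommRing L] (c x : L) (m : ℕ) :
    ∑ j ∈ range (m+4), (-1:L)^j * (aC (m+3) j : L) * c^j * x^(m+3-2*j)
    = x * (∑ j ∈ range (m+3), (-1:L)^j * (aC (m+2) j : L) * c^j * x^(m+2-2*j))
      - c * (∑ j ∈ range (m+2), (-1:L)^j * (aC (m+1) j : L) * c^j * x^(m+1-2*j)) := by
  have hrec : ∀ j, aC (m+3) (j+1) = aC (m+2) (j+1) + aC (m+1) j :=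
    fun j => aC_rec (m+1) j (Nat.le_add_left 1 m)
  have hL : ∑ j ∈ range (m+4), (-1:L)^j * (aC (m+3) j : L) * c^j * x^(m+3-2*j)
      = (∑ j ∈ range (m+3), -((-1:L)^j * (aC (m+2) (j+1) : L) * c^(j+1) * x^(m+1-2*j)))
        + (∑ j ∈ range (m+3), -((-1:L)^j * (aC (m+1) j : L) * c^(j+1) * x^(m+1-2*j)))
        + x^(m+3) := by
    rw [Finset.sum_range_succ' _ (m+3), ← Finset.sum_add_distrib]
    congr 1
    · apply Finset.sum_congr rfl
      intro j _
      rw [hrec j, show m+3-2*(j+1) = m+1-2*j from by omega]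
      push_cast
      ring
    · simp [aC_zero]
  have hx : x * (∑ j ∈ range (m+3), (-1:L)^j * (aC (m+2) j : L) * c^j * x^(m+2-2*j))
      = (∑ j ∈ range (m+3), -((-1:L)^j * (aC (m+2) (j+1) : L) * c^(j+1) * x^(m+1-2*j)))
        + x^(m+3) := by
    rw [Finset.mul_sum]
    have h1 : ∀ j ∈ range (m+3), x * ((-1:L)^j * (aC (m+2) j : L) * c^j * x^(m+2-2*j))
        = (-1:L)^j * (aC (m+2) j : L) * c^j * x^(m+3-2*j) := by
      intro j _
      rcases le_or_gt (2*j) (m+2) with h | h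
      · rw [show m+3-2*j = (m+2-2*j)+1 from by omega]
        ring
      · rw [aC_of_gt h]
        push_cast
        ring
    rw [Finset.sum_congr rfl h1, Finset.sum_range_succ' _ (m+2)]
    congr 1
    · rw [Finset.sum_range_succ _ (m+2), aC_of_gt (show m+2 < 2*(m+2+1) from by omega)]
      push_cast
      simp only [mul_zero, zero_mul, neg_zero, add_zero]
      apply Finset.sum_congr rfl
      intro j _
      rw [show m+3-2*(j+1) = m+1-2*j from by omega]
      ring
    · simp [aC_zero]
  have hc : c * (∑ j ∈ range (m+2), (-1:L)^j * (aC (m+1) j : L) * c^j * x^(m+1-2*j))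
      = -(∑ j ∈ range (m+3), -((-1:L)^j * (aC (m+1) j : L) * c^(j+1) * x^(m+1-2*j))) := by
    rw [Finset.mul_sum, Finset.sum_range_succ _ (m+2),
      aC_of_gt (show m+1 < 2*(m+2) from by omega)]
    push_cast
    simp only [mul_zero, zero_mul, neg_zero, add_zero, Finset.sum_neg_distrib, neg_neg]
    apply Finset.sum_congr rfl
    intro j _
    ring
  rw [hL, hx, hc]
  ring

lemma dickson_sum {L : Type*} [CommRing L] (y w : L) :
    ∀ n : ℕ, 1 ≤ n →
      y^n + w^n = ∑ j ∈ range (n+1), (-1:L)^j * (aC n j : L) * (y*w)^j * (y+w)^(n-2*j) := by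
  intro n
  induction n using Nat.strong_induction_on with
  | _ n ih =>
    intro hn
    match n, hn with
    | 1, _ =>
      rw [Finset.sum_range_succ, Finset.sum_range_succ, Finset.sum_range_zero,
        aC_zero, aC_of_gt (show 1 < 2*1 from by omega)]
      push_cast
      ring
    | 2, _ =>
      rw [Finset.sum_range_succ, Finset.sum_range_succ, Finset.sum_range_succ,
        Finset.sum_range_zero, aC_zero, aC_two, aC_of_gt (show 2 < 2*2 from by omega)]
      push_cast
      ring
    | (m+3), _ =>
      have h1 := ih (m+2) (by omega) (by omega)
      have h2 := ih (m+1) (by omega) (by omega)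
      have hr : y^(m+3) + w^(m+3)
          = (y+w) * (y^(m+2) + w^(m+2)) - (y*w) * (y^(m+1) + w^(m+1)) := by ring
      rw [hr, h1, h2, key_sum (y*w) (y+w) m]

theorem unique_root_above (K : Type*) [Field K] [CharZero K]
    (p : ℕ) (hp : Odd p) (hp3 : 3 ≤ p)
    (d R : K) (hd : d ≠ 0) (hR : R ≠ 0)
    (sqrtR : AlgebraicClosure K)
    (hsq : sqrtR ^ 2 = algebraMap K (AlgebraicClosure K) R)
    (hsR : sqrtR ∉ Set.range (algebraMap K (AlgebraicClosure K)))
    (hg : Irreducible (((X ^ p - Polynomial.C d) ^ 2 - Polynomial.C R : K[X])))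
    (z : AlgebraicClosure K)
    (hz : z ^ p = algebraMap K (AlgebraicClosure K) (d ^ 2 - R))
    (u : AlgebraicClosure K)
    (hu : algebraMap K (AlgebraicClosure K) ((d ^ 2 - R) ^ ((p - 1) / 2)) *
        (∑ k ∈ Finset.range ((p - 1) / 2 + 1),
          ((cOdd p k : AlgebraicClosure K) /
              algebraMap K (AlgebraicClosure K) (d ^ 2 - R) ^ k) * u ^ (2 * k + 1))
      - 2 * algebraMap K (AlgebraicClosure K) d *
          algebraMap K (AlgebraicClosure K) ((d ^ 2 - R) ^ ((p - 1) / 2)) = 0) :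
    ∃! y : AlgebraicClosure K,
      y ^ p = algebraMap K (AlgebraicClosure K) d + sqrtR ∧
        u = z ^ ((p - 1) / 2) * (y + z / y) := by
  obtain ⟨q, hpq⟩ : ∃ q, p = 2*q+1 := by
    obtain ⟨t, ht⟩ := hp; exact ⟨t, by omega⟩
  have hq1 : 1 ≤ q := by omega
  subst hpq
  set φ : K →+* AlgebraicClosure K := algebraMap K (AlgebraicClosure K) with hφ
  rw [show (2*q+1-1)/2 = q from by omega] at hu ⊢
  -- basic nonvanishing facts
  have hinj : Function.Injective φ := φ.injective
  have hr0 : sqrtR ≠ 0 := by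
    intro h
    apply hR
    apply hinj
    rw [map_zero, ← hsq, h]
    ring
  have hDK : d^2 - R ≠ 0 := by
    intro h
    have hRd : φ R = (φ d)^2 := by
      rw [show R = d^2 from by linear_combination -h, map_pow]
    have h2 : (sqrtR - φ d) * (sqrtR + φ d) = 0 := by
      linear_combination hsq + hRd
    rcases mul_eq_zero.mp h2 with h3 | h3
    · exact hsR ⟨d, (sub_eq_zero.mp h3).symm⟩
    · exact hsR ⟨-d, by rw [map_neg]; linear_combination -h3⟩
  have hDL : φ (d^2 - R) ≠ 0 := fun h => hDK (hinj (by rw [h, map_zero]))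
  have hz0 : z ≠ 0 := by
    intro h
    rw [h, zero_pow (by omega : 2*q+1 ≠ 0)] at hz
    exact hDL hz.symm
  have hds : φ d + sqrtR ≠ 0 := by
    intro h
    exact hsR ⟨-d, by rw [map_neg]; linear_combination -h⟩
  have hdiff : φ d + sqrtR ≠ φ d - sqrtR := by
    intro h
    have h2 : (2 : AlgebraicClosure K) * sqrtR = 0 := by linear_combination h
    exact hr0 ((mul_eq_zero.mp h2).resolve_left two_ne_zero)
  -- the quadratic y² - x y + z = 0
  have hζ : z ^ q ≠ 0 := pow_ne_zero _ hz0
  set x : AlgebraicClosure K := u / z ^ q with hxdef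
  have hux : u = z ^ q * x := by
    rw [hxdef, mul_div_cancel₀ _ hζ]
  obtain ⟨s, hs⟩ := IsAlgClosed.exists_pow_nat_eq (x^2 - 4*z) (n := 2) (by norm_num)
  set y₁ : AlgebraicClosure K := (x + s)/2 with hy₁def
  set y₂ : AlgebraicClosure K := (x - s)/2 with hy₂def
  have hsum : y₁ + y₂ = x := by
    rw [hy₁def, hy₂def]
    field_simp
    ring
  have hprod : y₁ * y₂ = z := by
    rw [hy₁def, hy₂def]
    field_simp
    linear_combination -hs
  have hy₁0 : y₁ ≠ 0 := fun h => hz0 (by rw [← hprod, h, zero_mul])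
  have hy₂0 : y₂ ≠ 0 := fun h => hz0 (by rw [← hprod, h, mul_zero])
  -- Dickson identity
  have hdick := dickson_sum y₁ y₂ (2*q+1) (by omega)
  rw [hprod, hsum] at hdick
  -- the sum in hu equals the Dickson sum
  have hSsum : ∑ k ∈ Finset.range (q + 1),
        ((cOdd (2*q+1) k : AlgebraicClosure K) / φ (d^2 - R) ^ k) * u ^ (2*k+1)
      = ∑ j ∈ range (2*q+1+1),
          (-1 : AlgebraicClosure K)^j * (aC (2*q+1) j : AlgebraicClosure K)
            * z^j * x^(2*q+1-2*j) := by
    have hrestr : ∑ j ∈ range (2*q+1+1),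
          (-1 : AlgebraicClosure K)^j * (aC (2*q+1) j : AlgebraicClosure K)
            * z^j * x^(2*q+1-2*j)
        = ∑ j ∈ range (q+1),
          (-1 : AlgebraicClosure K)^j * (aC (2*q+1) j : AlgebraicClosure K)
            * z^j * x^(2*q+1-2*j) := by
      rw [← Finset.sum_subset (Finset.range_subset_range.mpr (by omega : q+1 ≤ 2*q+1+1))]
      intro j hj hj'
      rw [Finset.mem_range] at hj hj'
      rw [aC_of_gt (by omega : 2*q+1 < 2*j)]
      push_cast
      ring
    rw [hrestr, ← Finset.sum_range_reflect
      (fun j => (-1 : AlgebraicClosure K)^j * (aC (2*q+1) j : AlgebraicClosure K)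
        * z^j * x^(2*q+1-2*j)) (q+1)]
    apply Finset.sum_congr rfl
    intro k hk
    rw [Finset.mem_range] at hk
    have hkq : k ≤ q := by omega
    rw [show q + 1 - 1 - k = q - k from by omega]
    have hcast : (cOdd (2*q+1) k : AlgebraicClosure K)
        = (-1 : AlgebraicClosure K)^(q-k) * (aC (2*q+1) (q-k) : AlgebraicClosure K) := by
      rw [cOdd_eq q k hkq]
      push_cast
      ring
    rw [hcast, hux, ← hz]
    rw [show 2*q+1 - 2*(q-k) = 2*k+1 from by omega]
    have hzz : (z^q)^(2*k+1) = z^(q-k) * (z^(2*q+1))^k := by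
      rw [← pow_mul, ← pow_mul, ← pow_add]
      congr 1
      zify [hkq]
      ring
    rw [mul_pow, hzz]
    have hzp : (z^(2*q+1))^k ≠ 0 := pow_ne_zero _ (pow_ne_zero _ hz0)
    field_simp
  -- conclude y₁^p + y₂^p = 2 φ d
  have hpowD : φ ((d^2-R)^q) ≠ 0 := by
    rw [map_pow]
    exact pow_ne_zero _ hDL
  have hSval : ∑ k ∈ Finset.range (q + 1),
        ((cOdd (2*q+1) k : AlgebraicClosure K) / φ (d^2 - R) ^ k) * u ^ (2*k+1)
      = 2 * φ d := by
    have h1 : φ ((d^2-R)^q) *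
        ((∑ k ∈ Finset.range (q + 1),
          ((cOdd (2*q+1) k : AlgebraicClosure K) / φ (d^2 - R) ^ k) * u ^ (2*k+1))
          - 2 * φ d) = 0 := by
      linear_combination hu
    rcases mul_eq_zero.mp h1 with h2 | h2
    · exact absurd h2 hpowD
    · exact sub_eq_zero.mp h2
  have hAB : y₁^(2*q+1) + y₂^(2*q+1) = 2 * φ d := by
    rw [hdick, ← hSsum, hSval]
  have hABm : y₁^(2*q+1) * y₂^(2*q+1) = (φ d)^2 - sqrtR^2 := by
    rw [← mul_pow, hprod, hz, hsq, map_sub, map_pow]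
  -- y₁^p ∈ {d + √R, d - √R}
  have hquad : (y₁^(2*q+1) - (φ d + sqrtR)) * (y₁^(2*q+1) - (φ d - sqrtR)) = 0 := by
    linear_combination y₁^(2*q+1) * hAB - hABm
  have hz1 : z / y₁ = y₂ := by
    rw [← hprod, mul_comm, mul_div_assoc, div_self hy₁0, mul_one]
  have hz2 : z / y₂ = y₁ := by
    rw [← hprod, mul_div_assoc, div_self hy₂0, mul_one]
  -- uniqueness helper: any valid y is y₁ or y₂
  have huniq : ∀ w : AlgebraicClosure K,
      w ^ (2*q+1) = φ d + sqrtR → u = z ^ q * (w + z / w) → w = y₁ ∨ w = y₂ := by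
    intro w hw1 hw2
    have hw0 : w ≠ 0 := by
      intro h
      rw [h, zero_pow (by omega : 2*q+1 ≠ 0)] at hw1
      exact hds hw1.symm
    have hx2 : w + z / w = x := by
      have h4 : z ^ q * (w + z / w) = z ^ q * x := by rw [← hw2, hux]
      exact mul_left_cancel₀ hζ h4
    have hww : w^2 - x*w + z = 0 := by
      have h3 : (w + z / w) * w = x * w := by rw [hx2]
      rw [add_mul, div_mul_cancel₀ _ hw0] at h3
      linear_combination h3
    have h5 : (w - y₁) * (w - y₂) = 0 := by
      linear_combination hww - w * hsum + hprod
    rcases mul_eq_zero.mp h5 with h | h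
    · exact Or.inl (sub_eq_zero.mp h)
    · exact Or.inr (sub_eq_zero.mp h)
  rcases mul_eq_zero.mp hquad with hA | hA
  · -- y₁ is the root
    have hA1 : y₁^(2*q+1) = φ d + sqrtR := sub_eq_zero.mp hA
    have hB1 : y₂^(2*q+1) = φ d - sqrtR := by linear_combination hAB - hA1
    refine ⟨y₁, ⟨hA1, by rw [hz1, hsum, hux]⟩, ?_⟩
    intro w ⟨hw1, hw2⟩
    rcases huniq w hw1 hw2 with h | h
    · exact h
    · exact absurd (by rw [← hw1, h, hB1] : φ d + sqrtR = φ d - sqrtR) hdiff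
  · -- y₂ is the root
    have hA1 : y₁^(2*q+1) = φ d - sqrtR := sub_eq_zero.mp hA
    have hB1 : y₂^(2*q+1) = φ d + sqrtR := by linear_combination hAB - hA1
    refine ⟨y₂, ⟨hB1, by rw [hz2, add_comm y₂ y₁, hsum, hux]⟩, ?_⟩
    intro w ⟨hw1, hw2⟩
    rcases huniq w hw1 hw2 with h | h
    · exact absurd (by rw [← hw1, h, hA1] : φ d + sqrtR = φ d - sqrtR) hdiff
    · exact h
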